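/- Reduction modulo n gives a multiplication-preserving surjection from SLL(2,ℤ) onto SLL(2,ℤ/nℤ), whose kernel (the preimage of the identity) is exactly the principal congruence subloop Γ(n) = {A ∈ SLL(2,ℤ) : A ≡ I mod n componentwise}. -/

import Mathlib

/-- Zorn vector matrices `[[a, x],[y, b]]` with `a b : R` and `x y : R³`. -/
structure Zorn (R : Type*) where
  a : R
  x : Fin 3 → R
  y : Fin 3 → R
  b : R

namespace Zorn

variable {R : Type*} [CommRing R]

/-- Dot product on `R³`. -/
def dot (u v : Fin 3 → R) : R := u 0 * v 0 + u 1 * v 1 + u 2 * v 2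

/-- Cross product on `R³`. -/
def cross (u v : Fin 3 → R) : Fin 3 → R :=
  ![u 1 * v 2 - u 2 * v 1, u 2 * v 0 - u 0 * v 2, u 0 * v 1 - u 1 * v 0]

/-- The Zorn vector matrix product. -/
def mul (A B : Zorn R) : Zorn R where
  a := A.a * B.a + dot A.x B.y
  x := fun i => A.a * B.x i + B.b * A.x i - cross A.y B.y i
  y := fun i => B.a * A.y i + A.b * B.y i + cross A.x B.x i
  b := A.b * B.b + dot A.y B.x

/-- The determinant of a Zorn vector matrix. -/
def det (A : Zorn R) : R := A.a * A.b - dot A.x A.y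

/-- The identity Zorn vector matrix. -/
def one : Zorn R := ⟨1, 0, 0, 1⟩

end Zorn

/-- Componentwise reduction modulo `n` of an integral Zorn matrix. -/
def Zorn.redMod (n : ℕ) (A : Zorn ℤ) : Zorn (ZMod n) :=
  ⟨(A.a : ZMod n), fun i => ((A.x i : ℤ) : ZMod n),
    fun i => ((A.y i : ℤ) : ZMod n), (A.b : ZMod n)⟩



lemma exists_coprime_shift (c N d : ℤ) (hd : d ≠ 0)
    (h : Int.gcd c (Int.gcd d N : ℤ) = 1) :
    ∃ t : ℤ, Int.gcd (c + N * t) d = 1 := by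
  set k := d.natAbs with hk
  set G : ℤ := (Int.gcd d (c ^ k) : ℤ) with hG
  have hGd : G ∣ d := (Int.gcd_dvd_left _ _)
  obtain ⟨t, ht⟩ := hGd
  refine ⟨t, ?_⟩
  by_contra hne
  obtain ⟨p, hp, hpdvd⟩ := Nat.exists_prime_and_dvd hne
  have hpct : (p : ℤ) ∣ c + N * t :=
    dvd_trans (Int.natCast_dvd_natCast.mpr hpdvd) (Int.gcd_dvd_left _ _)
  have hpd : (p : ℤ) ∣ d :=
    dvd_trans (Int.natCast_dvd_natCast.mpr hpdvd) (Int.gcd_dvd_right _ _)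
  have hpI : Prime (p : ℤ) := Nat.prime_iff_prime_int.mp hp
  by_cases hc : (p : ℤ) ∣ c
  · -- p ∣ c
    have hpN : ¬ (p : ℤ) ∣ N := by
      intro hN
      have : (p : ℤ) ∣ (Int.gcd c (Int.gcd d N : ℤ) : ℤ) :=
        Int.dvd_coe_gcd hc (Int.dvd_coe_gcd hpd hN)
      rw [h] at this
      exact hp.one_lt.ne' (Int.natCast_dvd_natCast.mp (by exact_mod_cast this) |> Nat.dvd_one.mp)
    have hpt : (p : ℤ) ∣ t := by
      have : (p : ℤ) ∣ N * t := by
        have := dvd_sub hpct hc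
        simpa using this
      rcases hpI.dvd_mul.mp this with h1 | h1
      · exact absurd h1 hpN
      · exact h1
    set m := (d.natAbs).factorization p with hm
    have hdn0 : d.natAbs ≠ 0 := Int.natAbs_ne_zero.mpr hd
    have hpdn : p ∣ d.natAbs := Int.natCast_dvd_natCast.mp (by
      refine Int.dvd_natAbs.mpr hpd)
    have hm1 : 1 ≤ m := (Nat.Prime.factorization_pos_of_dvd hp hdn0 hpdn)
    have hpmd : (p : ℤ) ^ m ∣ d := by
      have : (p ^ m : ℕ) ∣ d.natAbs := Nat.ordProj_dvd _ _
      have := Int.natCast_dvd_natCast.mpr this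
      push_cast at this
      exact this.trans ((abs_dvd _ _).mpr dvd_rfl)
    have hmk : m ≤ k := by
      have h1 : p ^ m ∣ d.natAbs := Nat.ordProj_dvd _ _
      have h2 : p ^ m ≤ d.natAbs := Nat.le_of_dvd (Nat.pos_of_ne_zero hdn0) h1
      have h3 : m < p ^ m := Nat.lt_pow_self hp.one_lt
      omega
    have hpmck : (p : ℤ) ^ m ∣ c ^ k :=
      dvd_trans (pow_dvd_pow _ hmk) (pow_dvd_pow_of_dvd hc k)
    have hpmG : (p : ℤ) ^ m ∣ G := Int.dvd_coe_gcd hpmd hpmck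
    have : (p : ℤ) ^ (m + 1) ∣ d := by
      rw [ht, pow_succ]
      exact mul_dvd_mul hpmG hpt
    have : (p : ℕ) ^ (m + 1) ∣ d.natAbs := by
      have h4 := Int.natAbs_dvd_natAbs.mpr this
      simpa [Int.natAbs_pow] using h4
    exact Nat.pow_succ_factorization_not_dvd hdn0 hp this
  · -- p ∤ c
    have hpG : ¬ (p : ℤ) ∣ G := by
      intro hG'
      have : (p : ℤ) ∣ c ^ k := hG'.trans (Int.gcd_dvd_right _ _)
      exact hc (hpI.dvd_of_dvd_pow this)
    have hpt : (p : ℤ) ∣ t := by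
      have : (p : ℤ) ∣ G * t := ht ▸ hpd
      rcases hpI.dvd_mul.mp this with h1 | h1
      · exact absurd h1 hpG
      · exact h1
    have : (p : ℤ) ∣ c := by
      have h2 : (p : ℤ) ∣ N * t := Dvd.dvd.mul_left hpt N
      have := dvd_sub hpct h2
      simpa using this
    exact hc this

lemma Zorn.ext' {R : Type*} {A B : Zorn R} (ha : A.a = B.a) (hx : A.x = B.x)
    (hy : A.y = B.y) (hb : A.b = B.b) : A = B := by
  cases A; cases B; simp_all


/-- reduction mod `n` is a multiplication-preserving surjection
from `SLL(2,ℤ)` onto `SLL(2,ℤ/nℤ)`, whose kernel is exactly the principal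
congruence subloop `Γ(n) = {A : A ≡ I mod n}`. -/
theorem redMod_hom_surjective_kernel (n : ℕ) (hn : 0 < n) :
    (∀ A B : Zorn ℤ, Zorn.redMod n (A.mul B) = (Zorn.redMod n A).mul (Zorn.redMod n B)) ∧
    (∀ B : Zorn (ZMod n), B.det = 1 → ∃ A : Zorn ℤ, A.det = 1 ∧ Zorn.redMod n A = B) ∧
    (∀ A : Zorn ℤ, A.det = 1 →
      (Zorn.redMod n A = Zorn.one ↔
        ((n : ℤ) ∣ A.a - 1 ∧ (∀ i, (n : ℤ) ∣ A.x i) ∧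
          (∀ i, (n : ℤ) ∣ A.y i) ∧ (n : ℤ) ∣ A.b - 1))) := by
  refine ⟨?_, ?_, ?_⟩
  · intro A B
    apply Zorn.ext'
    · simp only [Zorn.redMod, Zorn.mul, Zorn.dot]; push_cast; ring
    · funext i
      fin_cases i <;>
        · simp only [Zorn.redMod, Zorn.mul, Zorn.dot, Zorn.cross, Matrix.cons_val_zero,
            Matrix.cons_val_one, Matrix.head_cons, Matrix.cons_val_two, Matrix.tail_cons,
            Fin.isValue, Fin.zero_eta, Fin.mk_one, Fin.reduceFinMk]
          push_cast; ring
    · funext i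
      fin_cases i <;>
        · simp only [Zorn.redMod, Zorn.mul, Zorn.dot, Zorn.cross, Matrix.cons_val_zero,
            Matrix.cons_val_one, Matrix.head_cons, Matrix.cons_val_two, Matrix.tail_cons,
            Fin.isValue, Fin.zero_eta, Fin.mk_one, Fin.reduceFinMk]
          push_cast; ring
    · simp only [Zorn.redMod, Zorn.mul, Zorn.dot]; push_cast; ring
  · intro B hB
    haveI : NeZero n := ⟨hn.ne'⟩
    have hval : ∀ z : ZMod n, ((z.val : ℤ) : ZMod n) = z := by
      intro z
      push_cast
      simp [ZMod.natCast_val, ZMod.cast_id]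
    have hdet : B.a * B.b - (B.x 0 * B.y 0 + B.x 1 * B.y 1 + B.x 2 * B.y 2) = 1 := hB
    set a : ℤ := (B.a.val : ℤ) with ha
    set b0 : ℤ := (B.b.val : ℤ) with hb0
    set c : ℤ := ((B.x 0).val : ℤ) with hc
    set x1 : ℤ := ((B.x 1).val : ℤ) with hx1
    set x2 : ℤ := ((B.x 2).val : ℤ) + n with hx2
    set Y0 : ℤ := ((B.y 0).val : ℤ) with hY0
    set Y1 : ℤ := ((B.y 1).val : ℤ) with hY1
    set Y2 : ℤ := ((B.y 2).val : ℤ) with hY2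
    -- residue facts
    have hra : ((a : ℤ) : ZMod n) = B.a := hval _
    have hrb : ((b0 : ℤ) : ZMod n) = B.b := hval _
    have hrc : ((c : ℤ) : ZMod n) = B.x 0 := hval _
    have hrx1 : ((x1 : ℤ) : ZMod n) = B.x 1 := hval _
    have hrx2 : ((x2 : ℤ) : ZMod n) = B.x 2 := by
      rw [hx2]; push_cast; simp [hval]
    have hrY0 : ((Y0 : ℤ) : ZMod n) = B.y 0 := hval _
    have hrY1 : ((Y1 : ℤ) : ZMod n) = B.y 1 := hval _
    have hrY2 : ((Y2 : ℤ) : ZMod n) = B.y 2 := hval _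
    -- base determinant congruence
    have h1 : (n : ℤ) ∣ (a * b0 - (c * Y0 + x1 * Y1 + x2 * Y2)) - 1 := by
      rw [← ZMod.intCast_zmod_eq_zero_iff_dvd]
      push_cast
      rw [hra, hrb, hrc, hrx1, hrx2, hrY0, hrY1, hrY2]
      linear_combination hdet
    set g12 : ℤ := (Int.gcd x1 x2 : ℤ) with hg12
    set d : ℤ := (Int.gcd a g12 : ℤ) with hd'
    have hx2pos : 0 < x2 := by
      rw [hx2]; positivity
    have hd : d ≠ 0 := by
      intro h0
      rw [hd'] at h0
      have hz : Int.gcd a g12 = 0 := by exact_mod_cast h0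
      have hz2 : g12 = 0 := (Int.gcd_eq_zero_iff.mp hz).2
      rw [hg12] at hz2
      have hz3 : Int.gcd x1 x2 = 0 := by exact_mod_cast hz2
      have := (Int.gcd_eq_zero_iff.mp hz3).2
      omega
    have hcop : Int.gcd c (Int.gcd d (n : ℤ) : ℤ) = 1 := by
      set g : ℕ := Int.gcd c (Int.gcd d (n : ℤ) : ℤ) with hg
      have hgc : (g : ℤ) ∣ c := (Int.gcd_dvd_left _ _)
      have hgdn : (g : ℤ) ∣ (Int.gcd d (n : ℤ) : ℤ) := (Int.gcd_dvd_right _ _)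
      have hgd : (g : ℤ) ∣ d := hgdn.trans (Int.gcd_dvd_left _ _)
      have hgn : (g : ℤ) ∣ (n : ℤ) := hgdn.trans (Int.gcd_dvd_right _ _)
      have hga : (g : ℤ) ∣ a := hgd.trans (Int.gcd_dvd_left _ _)
      have hgg12 : (g : ℤ) ∣ g12 := hgd.trans (Int.gcd_dvd_right _ _)
      have hgx1 : (g : ℤ) ∣ x1 := hgg12.trans (Int.gcd_dvd_left _ _)
      have hgx2 : (g : ℤ) ∣ x2 := hgg12.trans (Int.gcd_dvd_right _ _)
      have hone : (g : ℤ) ∣ 1 := by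
        have hh := ((((hga.mul_right b0).sub (hgc.mul_right Y0)).sub
          (hgx1.mul_right Y1)).sub (hgx2.mul_right Y2)).sub (hgn.trans h1)
        convert hh using 1
        · rfl
        ring
      have : g ∣ 1 := by exact_mod_cast hone
      exact Nat.dvd_one.mp this
    obtain ⟨t, hgcd⟩ := exists_coprime_shift c (n : ℤ) d hd hcop
    set x0 : ℤ := c + (n : ℤ) * t with hx0
    -- Bezout coefficients
    have e0 : (1 : ℤ) = x0 * Int.gcdA x0 d + d * Int.gcdB x0 d := by
      rw [← Int.gcd_eq_gcd_ab, hgcd]; norm_num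
    have e1 : d = a * Int.gcdA a g12 + g12 * Int.gcdB a g12 := by
      rw [hd']; exact Int.gcd_eq_gcd_ab a g12
    have e2 : g12 = x1 * Int.gcdA x1 x2 + x2 * Int.gcdB x1 x2 := by
      rw [hg12]; exact Int.gcd_eq_gcd_ab x1 x2
    set p : ℤ := Int.gcdB x0 d * Int.gcdA a g12 with hp
    set q0 : ℤ := Int.gcdA x0 d with hq0
    set q1 : ℤ := Int.gcdB x0 d * Int.gcdB a g12 * Int.gcdA x1 x2 with hq1
    set q2 : ℤ := Int.gcdB x0 d * Int.gcdB a g12 * Int.gcdB x1 x2 with hq2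
    have hbez : p * a + q0 * x0 + q1 * x1 + q2 * x2 = 1 := by
      rw [hp, hq0, hq1, hq2]
      linear_combination -e0 - Int.gcdB x0 d * e1 -
        (Int.gcdB x0 d * Int.gcdB a g12) * e2
    -- shifted determinant congruence
    have h2 : (n : ℤ) ∣ (a * b0 - (x0 * Y0 + x1 * Y1 + x2 * Y2)) - 1 := by
      obtain ⟨K0, hK0⟩ := h1
      refine ⟨K0 - t * Y0, ?_⟩
      rw [hx0]
      linear_combination hK0
    obtain ⟨K, hK⟩ := h2
    refine ⟨⟨a, ![x0, x1, x2], ![Y0 + n * K * q0, Y1 + n * K * q1, Y2 + n * K * q2],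
        b0 - n * K * p⟩, ?_, ?_⟩
    · show _ * _ - _ = 1
      simp only [Zorn.det, Zorn.dot, Matrix.cons_val_zero, Matrix.cons_val_one,
        Matrix.head_cons, Matrix.cons_val_two, Matrix.tail_cons]
      linear_combination hK - ((n : ℤ) * K) * hbez
    · apply Zorn.ext'
      · exact hra
      · funext i
        fin_cases i <;>
          simp only [Zorn.redMod, Matrix.cons_val_zero, Matrix.cons_val_one,
            Matrix.head_cons, Matrix.cons_val_two, Matrix.tail_cons, Fin.isValue,
            Fin.zero_eta, Fin.mk_one, Fin.reduceFinMk]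
        · rw [hx0]; push_cast; rw [hrc]; simp
        · exact hrx1
        · exact hrx2
      · funext i
        fin_cases i <;>
          simp only [Zorn.redMod, Matrix.cons_val_zero, Matrix.cons_val_one,
            Matrix.head_cons, Matrix.cons_val_two, Matrix.tail_cons, Fin.isValue,
            Fin.zero_eta, Fin.mk_one, Fin.reduceFinMk]
        · push_cast; rw [hrY0]; simp
        · push_cast; rw [hrY1]; simp
        · push_cast; rw [hrY2]; simp
      · show ((b0 - n * K * p : ℤ) : ZMod n) = B.b
        push_cast
        rw [hrb]; simp
  · intro A hA
    constructor
    · intro h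
      have ha := congrArg Zorn.a h
      have hb := congrArg Zorn.b h
      have hx := congrArg Zorn.x h
      have hy := congrArg Zorn.y h
      simp only [Zorn.redMod, Zorn.one] at ha hb hx hy
      refine ⟨?_, fun i => ?_, fun i => ?_, ?_⟩
      · rw [← ZMod.intCast_zmod_eq_zero_iff_dvd]
        push_cast
        rw [ha]; ring
      · rw [← ZMod.intCast_zmod_eq_zero_iff_dvd]
        have := congrFun hx i
        simpa using this
      · rw [← ZMod.intCast_zmod_eq_zero_iff_dvd]
        have := congrFun hy i
        simpa using this
      · rw [← ZMod.intCast_zmod_eq_zero_iff_dvd]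
        push_cast
        rw [hb]; ring
    · rintro ⟨h1, h2, h3, h4⟩
      apply Zorn.ext'
      · have := (ZMod.intCast_zmod_eq_zero_iff_dvd _ n).mpr h1
        push_cast at this
        show ((A.a : ℤ) : ZMod n) = 1
        linear_combination this
      · funext i
        have := (ZMod.intCast_zmod_eq_zero_iff_dvd _ n).mpr (h2 i)
        show ((A.x i : ℤ) : ZMod n) = 0
        simpa using this
      · funext i
        have := (ZMod.intCast_zmod_eq_zero_iff_dvd _ n).mpr (h3 i)
        show ((A.y i : ℤ) : ZMod n) = 0
        simpa using this
      · have := (ZMod.intCast_zmod_eq_zero_iff_dvd _ n).mpr h4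
        push_cast at this
        show ((A.b : ℤ) : ZMod n) = 1
        linear_combination this
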